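/- For any letter a and words of length n over an alphabet of n letters, the commutator identity holds: R2R_{n+1} ∘ sh_a - sh_a ∘ R2R_n = (n+1)·sh_a + Σ_{b=1}^{n} sh_b ∘ Θ_{b,a}. -/

import Mathlib

set_option linter.unusedSectionVars false
set_option maxHeartbeats 1000000


open Finsupp

variable {A : Type} [DecidableEq A]

/-- The formal sum of `Finsupp.single w 1` over a list of words. -/
noncomputable def wordSum (l : List (List A)) : List A →₀ ℂ :=
  (l.map fun w => Finsupp.single w (1 : ℂ)).sum

/-- All words obtained from `w` by inserting the letter `a` at one position. -/
def insertions (a : A) : List A → List (List A)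
  | [] => [[a]]
  | b :: t => (a :: b :: t) :: (insertions a t).map (b :: ·)

/-- All words obtained from `w` by deleting one occurrence of the letter `a`. -/
def deletions (a : A) : List A → List (List A)
  | [] => []
  | b :: t => (if b = a then [t] else []) ++ (deletions a t).map (b :: ·)

/-- All words obtained from `w` by replacing one occurrence of `b` by `a`. -/
def replacements (b a : A) : List A → List (List A)
  | [] => []
  | c :: t => (if c = b then [a :: t] else []) ++ (replacements b a t).map (c :: ·)

/-- The insertion operator `sh_a`. -/
noncomputable def shOp (a : A) : (List A →₀ ℂ) →ₗ[ℂ] (List A →₀ ℂ) :=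
  Finsupp.linearCombination ℂ (fun w => wordSum (insertions a w))

/-- The deletion operator `∂_a`. -/
noncomputable def delOp (a : A) : (List A →₀ ℂ) →ₗ[ℂ] (List A →₀ ℂ) :=
  Finsupp.linearCombination ℂ (fun w => wordSum (deletions a w))

/-- The replacement operator `Θ_{b,a}`. -/
noncomputable def repOp (b a : A) : (List A →₀ ℂ) →ₗ[ℂ] (List A →₀ ℂ) :=
  Finsupp.linearCombination ℂ (fun w => wordSum (replacements b a w))

/-- Remove the letter at position `i` of `w` and reinsert it at position `j` (0-based). -/
def moveCard (w : List A) (i j : ℕ) : List A :=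
  match w[i]? with
  | Option.none => w
  | Option.some c => (w.eraseIdx i).insertIdx j c

/-- The random-to-random operator applied to a single word: the sum over all ordered
pairs of positions `(i, j)` of removing the letter at position `i` and reinserting it
at position `j` (the diagonal `i = j` contributes `w.length • w`). -/
noncomputable def r2rWord (w : List A) : List A →₀ ℂ :=
  ∑ i ∈ Finset.range w.length, ∑ j ∈ Finset.range w.length,
    Finsupp.single (moveCard w i j) (1 : ℂ)

/-- The (unnormalized) random-to-random operator `R2R`. -/
noncomputable def r2rOp : (List A →₀ ℂ) →ₗ[ℂ] (List A →₀ ℂ) :=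
  Finsupp.linearCombination ℂ r2rWord

/-- Random-to-top on a single word: move the letter at each position to the end. -/
noncomputable def r2tWord (w : List A) : List A →₀ ℂ :=
  ∑ i ∈ Finset.range w.length, Finsupp.single (moveCard w i (w.length - 1)) (1 : ℂ)

/-- The (unnormalized) random-to-top operator `R2T`. -/
noncomputable def r2tOp : (List A →₀ ℂ) →ₗ[ℂ] (List A →₀ ℂ) :=
  Finsupp.linearCombination ℂ r2tWord

/-- Top-to-random on a single word: move the last letter to each position. -/
noncomputable def t2rWord (w : List A) : List A →₀ ℂ :=
  ∑ j ∈ Finset.range w.length, Finsupp.single (moveCard w (w.length - 1) j) (1 : ℂ)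

/-- The (unnormalized) top-to-random operator `T2R`. -/
noncomputable def t2rOp : (List A →₀ ℂ) →ₗ[ℂ] (List A →₀ ℂ) :=
  Finsupp.linearCombination ℂ t2rWord

noncomputable def consOp (c : A) : (List A →₀ ℂ) →ₗ[ℂ] (List A →₀ ℂ) :=
  Finsupp.linearCombination ℂ (fun w => Finsupp.single (c :: w) (1:ℂ))

lemma wordSum_nil : wordSum ([] : List (List A)) = 0 := rfl

lemma wordSum_cons (x : List A) (l : List (List A)) :
    wordSum (x :: l) = Finsupp.single x (1:ℂ) + wordSum l := by
  simp [wordSum]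

lemma wordSum_append (l₁ l₂ : List (List A)) :
    wordSum (l₁ ++ l₂) = wordSum l₁ + wordSum l₂ := by
  simp [wordSum]

lemma lc_single (f : List A → (List A →₀ ℂ)) (w : List A) :
    Finsupp.linearCombination ℂ f (Finsupp.single w (1:ℂ)) = f w := by
  simp [Finsupp.linearCombination_single]

lemma consOp_single (c : A) (w : List A) :
    consOp c (Finsupp.single w (1:ℂ)) = Finsupp.single (c :: w) (1:ℂ) := lc_single _ w

lemma wordSum_map_cons (c : A) (l : List (List A)) :
    wordSum (l.map (c :: ·)) = consOp c (wordSum l) := by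
  induction l with
  | nil => simp [wordSum]
  | cons x t ih => simp [wordSum_cons, map_add, consOp_single, ih]

lemma shOp_single (a : A) (w : List A) :
    shOp a (Finsupp.single w (1:ℂ)) = wordSum (insertions a w) := lc_single _ w

lemma delOp_single (a : A) (w : List A) :
    delOp a (Finsupp.single w (1:ℂ)) = wordSum (deletions a w) := lc_single _ w

lemma repOp_single (b a : A) (w : List A) :
    repOp b a (Finsupp.single w (1:ℂ)) = wordSum (replacements b a w) := lc_single _ w

lemma shOp_cons (a c : A) (t : List A) :
    shOp a (Finsupp.single (c :: t) (1:ℂ)) =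
      Finsupp.single (a :: c :: t) (1:ℂ) + consOp c (shOp a (Finsupp.single t (1:ℂ))) := by
  rw [shOp_single, shOp_single, insertions, wordSum_cons, wordSum_map_cons]

lemma delOp_cons (b c : A) (t : List A) :
    delOp b (Finsupp.single (c :: t) (1:ℂ)) =
      (if c = b then Finsupp.single t (1:ℂ) else 0) + consOp c (delOp b (Finsupp.single t (1:ℂ))) := by
  rw [delOp_single, delOp_single, deletions, wordSum_append, wordSum_map_cons]
  congr 1
  split <;> simp [wordSum_cons, wordSum_nil]

lemma repOp_cons (b a c : A) (t : List A) :
    repOp b a (Finsupp.single (c :: t) (1:ℂ)) =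
      (if c = b then Finsupp.single (a :: t) (1:ℂ) else 0) +
        consOp c (repOp b a (Finsupp.single t (1:ℂ))) := by
  rw [repOp_single, repOp_single, replacements, wordSum_append, wordSum_map_cons]
  congr 1
  split <;> simp [wordSum_cons, wordSum_nil]

lemma single_eq_smul (w : List A) (r : ℂ) :
    (Finsupp.single w r : List A →₀ ℂ) = r • Finsupp.single w (1:ℂ) := by
  rw [Finsupp.smul_single, smul_eq_mul, mul_one]

lemma shOp_consOp (a c : A) (v : List A →₀ ℂ) :
    shOp a (consOp c v) =
      consOp a (consOp c v) + consOp c (shOp a v) := by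
  induction v using Finsupp.induction_linear with
  | zero => simp
  | add f g hf hg => simp only [map_add, hf, hg]; abel
  | single x r =>
    rw [single_eq_smul]
    simp only [map_smul, consOp_single, shOp_cons, smul_add]

lemma delOp_consOp (b c : A) (v : List A →₀ ℂ) :
    delOp b (consOp c v) =
      (if c = b then v else 0) + consOp c (delOp b v) := by
  induction v using Finsupp.induction_linear with
  | zero => simp
  | add f g hf hg =>
    simp only [map_add, hf, hg]
    split <;> abel
  | single x r =>
    rw [single_eq_smul]
    simp only [map_smul, consOp_single, delOp_cons, smul_add, smul_ite, smul_zero]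

lemma repOp_consOp (b a c : A) (v : List A →₀ ℂ) :
    repOp b a (consOp c v) =
      (if c = b then consOp a v else 0) + consOp c (repOp b a v) := by
  induction v using Finsupp.induction_linear with
  | zero => simp
  | add f g hf hg =>
    simp only [map_add, hf, hg]
    split <;> abel
  | single x r =>
    rw [single_eq_smul]
    simp only [map_smul, consOp_single, repOp_cons, smul_add, smul_ite, smul_zero]

lemma comm_del_sh (b a : A) (w : List A) :
    delOp b (shOp a (Finsupp.single w (1:ℂ))) =
      shOp a (delOp b (Finsupp.single w (1:ℂ))) + repOp b a (Finsupp.single w (1:ℂ)) +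
        (if b = a then ((w.length : ℂ) + 1) • Finsupp.single w (1:ℂ) else 0) := by
  induction w with
  | nil =>
    rw [shOp_single, insertions, wordSum_cons, wordSum_nil, add_zero, delOp_cons,
      delOp_single, repOp_single, deletions, replacements]
    simp only [wordSum_nil, map_zero, add_zero, zero_add, List.length_nil, Nat.cast_zero,
      one_smul]
    rcases eq_or_ne b a with h | h
    · subst h; simp
    · rw [if_neg (Ne.symm h), if_neg h]
  | cons c t ih =>
    rcases eq_or_ne c b with hcb | hcb <;> rcases eq_or_ne b a with hba | hba
    · subst hcb; subst hba
      simp only [shOp_cons, delOp_cons, repOp_cons, map_add, delOp_consOp, shOp_consOp, ih,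
        consOp_single, map_smul, map_zero, eq_self_iff_true, if_true, List.length_cons,
        Nat.cast_add, Nat.cast_one, add_zero, zero_add, smul_zero]
      module
    · subst hcb
      simp only [shOp_cons, delOp_cons, repOp_cons, map_add, delOp_consOp, shOp_consOp, ih,
        consOp_single, map_smul, map_zero, eq_self_iff_true, if_true, if_neg hba,
        if_neg (Ne.symm hba), add_zero, zero_add, smul_zero]
      abel
    · subst hba
      simp only [shOp_cons, delOp_cons, repOp_cons, map_add, delOp_consOp, shOp_consOp, ih,
        consOp_single, map_smul, map_zero, eq_self_iff_true, if_true, if_neg hcb,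
        List.length_cons, Nat.cast_add, Nat.cast_one, add_zero, zero_add, smul_zero]
      module
    · simp only [shOp_cons, delOp_cons, repOp_cons, map_add, delOp_consOp, shOp_consOp, ih,
        consOp_single, map_smul, map_zero, if_neg hcb, if_neg hba, if_neg (Ne.symm hba),
        add_zero, zero_add, smul_zero]
      abel

lemma shOp_shOp_single (a b : A) (w : List A) :
    shOp a (shOp b (Finsupp.single w (1:ℂ))) = shOp b (shOp a (Finsupp.single w (1:ℂ))) := by
  induction w with
  | nil =>
    simp [shOp_single, insertions, wordSum_cons, wordSum_nil, wordSum_map_cons, consOp_single]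
    abel
  | cons c t ih =>
    simp only [shOp_cons, map_add, shOp_consOp, consOp_single, ih]
    abel

lemma shOp_shOp (a b : A) (v : List A →₀ ℂ) :
    shOp a (shOp b v) = shOp b (shOp a v) := by
  induction v using Finsupp.induction_linear with
  | zero => simp
  | add f g hf hg => simp only [map_add, hf, hg]
  | single x r =>
    rw [single_eq_smul]
    simp only [map_smul, shOp_shOp_single]

lemma insertions_wordSum (c : A) (u : List A) :
    wordSum (insertions c u) =
      ∑ j ∈ Finset.range (u.length + 1), Finsupp.single (u.insertIdx j c) (1:ℂ) := by
  induction u with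
  | nil => simp [insertions, wordSum_cons, wordSum_nil]
  | cons d t ih =>
    rw [insertions, wordSum_cons, wordSum_map_cons, ih, List.length_cons]
    conv_rhs => rw [Finset.sum_range_succ']
    rw [List.insertIdx_zero, add_comm]
    congr 1
    rw [map_sum]
    apply Finset.sum_congr rfl
    intro j _
    rw [consOp_single, List.insertIdx_succ_cons]

lemma deletions_wordSum (b : A) (w : List A) :
    wordSum (deletions b w) =
      ∑ i ∈ Finset.range w.length,
        (if w[i]? = some b then Finsupp.single (w.eraseIdx i) (1:ℂ) else 0) := by
  induction w with
  | nil => simp [deletions, wordSum_nil]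
  | cons c t ih =>
    rw [deletions, wordSum_append, wordSum_map_cons, ih, List.length_cons]
    conv_rhs => rw [Finset.sum_range_succ']
    rw [add_comm]
    congr 1
    · rw [map_sum]
      apply Finset.sum_congr rfl
      intro i _
      rw [show ((c :: t)[i+1]?) = t[i]? from rfl,
        show ((c :: t).eraseIdx (i+1)) = c :: t.eraseIdx i from rfl]
      split
      · rw [consOp_single]
      · rw [map_zero]
    · rw [show ((c :: t)[0]?) = some c from rfl,
        show ((c :: t).eraseIdx 0) = t from rfl]
      rcases eq_or_ne c b with h | h
      · rw [if_pos h, if_pos (by rw [h]), wordSum_cons, wordSum_nil, add_zero]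
      · rw [if_neg h, if_neg (by simpa using h), wordSum_nil]

lemma sum_sh_del_single [Fintype A] (w : List A) :
    ∑ b : A, shOp b (delOp b (Finsupp.single w (1:ℂ))) = r2rWord w := by
  have step1 : ∀ b : A, shOp b (delOp b (Finsupp.single w (1:ℂ))) =
      ∑ i ∈ Finset.range w.length,
        (if w[i]? = some b then shOp b (Finsupp.single (w.eraseIdx i) (1:ℂ)) else 0) := by
    intro b
    rw [delOp_single, deletions_wordSum, map_sum]
    refine Finset.sum_congr rfl fun i _ => ?_
    rw [apply_ite (shOp b), map_zero]
  simp only [step1]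
  rw [Finset.sum_comm]
  refine Finset.sum_congr rfl fun i hi => ?_
  have hi' : i < w.length := Finset.mem_range.mp hi
  have hc : w[i]? = some (w.get ⟨i, hi'⟩) := List.getElem?_eq_getElem hi'
  set c := w.get ⟨i, hi'⟩ with hcdef
  simp only [hc, Option.some.injEq]
  rw [Finset.sum_ite_eq, if_pos (Finset.mem_univ c)]
  have hlen : (w.eraseIdx i).length + 1 = w.length := by
    rw [List.length_eraseIdx, if_pos hi']
    omega
  rw [shOp_single, insertions_wordSum, hlen]
  refine Finset.sum_congr rfl fun j _ => ?_
  congr 1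
  rw [moveCard, hc]

lemma r2r_apply [Fintype A] (v : List A →₀ ℂ) :
    r2rOp v = ∑ b : A, shOp b (delOp b v) := by
  induction v using Finsupp.induction_linear with
  | zero => simp
  | add f g hf hg => simp only [map_add, hf, hg, Finset.sum_add_distrib]
  | single x r =>
    rw [single_eq_smul]
    simp only [map_smul]
    rw [show (r2rOp (Finsupp.single x (1:ℂ)) : List A →₀ ℂ) = r2rWord x from lc_single _ x,
      ← sum_sh_del_single x, Finset.smul_sum]


/-- **Theorem 38, Equation (16).** For words of length `n` over an alphabet of `n`
letters, `R2R_{n+1} ∘ sh_a - sh_a ∘ R2R_n = (n+1) sh_a + ∑_b sh_b ∘ Θ_{b,a}`. -/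
theorem r2r_sh_commutator_eq (n : ℕ) [Fintype A] (hcard : Fintype.card A = n)
    (a : A) (w : List A) (hw : w.length = n) :
    r2rOp (shOp a (Finsupp.single w (1 : ℂ))) -
      shOp a (r2rOp (Finsupp.single w (1 : ℂ))) =
    ((n : ℂ) + 1) • shOp a (Finsupp.single w (1 : ℂ)) +
      ∑ b : A, shOp b (repOp b a (Finsupp.single w (1 : ℂ))) := by
  subst hw
  rw [r2r_apply, r2r_apply, map_sum]
  have key : ∀ b : A, shOp b (delOp b (shOp a (Finsupp.single w (1:ℂ)))) =
      shOp a (shOp b (delOp b (Finsupp.single w (1:ℂ)))) +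
        shOp b (repOp b a (Finsupp.single w (1:ℂ))) +
        (if b = a then ((w.length : ℂ) + 1) • shOp b (Finsupp.single w (1:ℂ)) else 0) := by
    intro b
    rw [comm_del_sh, map_add, map_add, shOp_shOp b a, apply_ite (shOp b), map_zero, map_smul]
  simp only [key]
  rw [Finset.sum_add_distrib, Finset.sum_add_distrib, Finset.sum_ite_eq',
    if_pos (Finset.mem_univ a)]
  abel
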